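/- Let L be a full-rank lattice in a finite-dimensional real inner product space H. The Fourier transform (as a tempered distribution) of the counting measure δ_L = Σ_{ℓ∈L} δ_ℓ is, up to a positive constant, the counting measure δ_{L*} on the dual lattice L* = {v ∈ H : ⟨v,ℓ⟩ ∈ 2πℤ for all ℓ ∈ L}. -/

import Mathlib

open MeasureTheory Real Complex
open scoped RealInnerProductSpace FourierTransform SchwartzMap

noncomputable section
namespace PA

abbrev E (n : ℕ) := EuclideanSpace ℝ (Fin n)

def zc {n : ℕ} (l : Fin n → ℤ) : E n := WithLp.toLp 2 (fun i => (l i : ℝ))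

def toE {n : ℕ} (y : Fin n → ℝ) : E n := WithLp.toLp 2 y

def consE {n : ℕ} (t : ℝ) (y : E n) : E (n+1) := WithLp.toLp 2 (Fin.cons t (WithLp.ofLp y) : Fin (n+1) → ℝ)

def tailE {n : ℕ} (x : E (n+1)) : E n := WithLp.toLp 2 (fun i : Fin n => x i.succ)

lemma abs_coord_le {n : ℕ} (x : E n) (i : Fin n) : |x i| ≤ ‖x‖ := by
  rw [EuclideanSpace.norm_eq, ← Real.sqrt_sq_eq_abs]
  apply Real.sqrt_le_sqrt
  simpa [Real.norm_eq_abs, sq_abs] using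
    Finset.single_le_sum (f := fun j => x j ^ 2) (fun j _ => sq_nonneg _) (Finset.mem_univ i)

lemma norm_tail_le {n : ℕ} (x : E (n+1)) : ‖tailE x‖ ≤ ‖x‖ := by
  rw [EuclideanSpace.norm_eq, EuclideanSpace.norm_eq]
  apply Real.sqrt_le_sqrt
  rw [Fin.sum_univ_succ]
  exact le_add_of_nonneg_left (by positivity : (0:ℝ) ≤ ‖x 0‖ ^ 2)

@[simp] lemma consE_zero {n : ℕ} (t : ℝ) (y : E n) : consE t y 0 = t := rfl
@[simp] lemma consE_succ {n : ℕ} (t : ℝ) (y : E n) (i : Fin n) : consE t y i.succ = y i := by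
  simp [consE]

lemma abs_le_norm_consE {n : ℕ} (t : ℝ) (y : E n) : |t| ≤ ‖consE t y‖ := by
  simpa using abs_coord_le (consE t y) 0

lemma norm_le_norm_consE {n : ℕ} (t : ℝ) (y : E n) : ‖y‖ ≤ ‖consE t y‖ := by
  have h : tailE (consE t y) = y := PiLp.ext fun i => by simp [tailE]
  simpa [h] using norm_tail_le (consE t y)

lemma zc_cons {n : ℕ} (k : ℤ) (l : Fin n → ℤ) :
    zc (Fin.cons k l) = consE (k : ℝ) (zc l) := by
  ext i
  refine Fin.cases ?_ (fun j => ?_) i <;> simp [zc, consE]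

lemma inner_consE {n : ℕ} (t κ : ℝ) (y ξ : E n) :
    ⟪consE t y, consE κ ξ⟫ = t * κ + ⟪y, ξ⟫ := by
  simp [PiLp.inner_apply, Fin.sum_univ_succ, RCLike.inner_apply]
  ring


/-- decay of Schwartz functions -/
lemma schwartz_decay {V : Type*} [NormedAddCommGroup V] [NormedSpace ℝ V]
    (f : 𝓢(V, ℂ)) (k : ℕ) :
    ∃ C : ℝ, 0 ≤ C ∧ ∀ x, ‖f x‖ ≤ C * ((1 + ‖x‖) ^ k)⁻¹ := by
  refine ⟨2 ^ k * (Finset.Iic (k, 0)).sup (fun m => SchwartzMap.seminorm ℝ m.1 m.2) f,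
    by positivity, fun x => ?_⟩
  have h := SchwartzMap.one_add_le_sup_seminorm_apply (𝕜 := ℝ) (m := (k, 0))
    le_rfl le_rfl f x
  rw [norm_iteratedFDeriv_zero] at h
  calc ‖f x‖ = ((1 + ‖x‖) ^ k * ‖f x‖) * ((1 + ‖x‖) ^ k)⁻¹ := by
        field_simp
    _ ≤ (2 ^ k * (Finset.Iic (k, 0)).sup (fun m => SchwartzMap.seminorm ℝ m.1 m.2) f)
        * ((1 + ‖x‖) ^ k)⁻¹ := by gcongr

lemma summable_int_pow : Summable (fun k : ℤ => ((1 + |(k : ℝ)|) ^ 2)⁻¹) := by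
  have h : Summable (fun n : ℕ => ((1 + (n : ℝ)) ^ 2)⁻¹) := by
    have := (summable_nat_add_iff (f := fun n : ℕ => ((n : ℝ) ^ 2)⁻¹) 1).2
      (by simpa using summable_one_div_nat_pow.2 one_lt_two)
    simpa [add_comm] using this
  apply Summable.of_nat_of_neg <;> simpa using h

lemma summable_prod_pow (n : ℕ) :
    Summable (fun l : Fin n → ℤ => ∏ i, ((1 + |(l i : ℝ)|) ^ 2)⁻¹) := by
  induction n with
  | zero => exact .of_finite
  | succ n ih =>
    have h2 := Summable.mul_of_nonneg summable_int_pow ih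
      (fun k => by positivity) (fun l => by positivity)
    refine ((Fin.consEquiv (fun _ : Fin (n+1) => ℤ)).summable_iff).1 (h2.congr fun p => ?_)
    simp [Fin.consEquiv, Function.comp, Fin.prod_univ_succ, mul_comm]

lemma prod_le_pow_norm {n : ℕ} (l : Fin n → ℤ) :
    ((1 + ‖zc l‖) ^ (2 * n))⁻¹ ≤ ∏ i, ((1 + |(l i : ℝ)|) ^ 2)⁻¹ := by
  rw [Finset.prod_inv_distrib]
  apply inv_anti₀ (by positivity)
  calc ∏ i, (1 + |(l i : ℝ)|) ^ 2 ≤ ∏ _i : Fin n, (1 + ‖zc l‖) ^ 2 := by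
        apply Finset.prod_le_prod (fun i _ => by positivity)
        intro i _
        have hi : |(l i : ℝ)| ≤ ‖zc l‖ := abs_coord_le (zc l) i
        apply pow_le_pow_left₀ (by positivity)
        linarith
    _ = (1 + ‖zc l‖) ^ (2 * n) := by
        rw [Finset.prod_const, Finset.card_univ, Fintype.card_fin, ← pow_mul, mul_comm]

/-- summability of Schwartz values over the lattice -/
lemma schwartz_summable {n : ℕ} (f : 𝓢(E n, ℂ)) :
    Summable fun l : Fin n → ℤ => ‖f (zc l)‖ := by
  obtain ⟨C, hC, hf⟩ := schwartz_decay f (2 * n)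
  apply Summable.of_nonneg_of_le (fun l => norm_nonneg _)
    (fun l => le_trans (hf (zc l)) ?_) (((summable_prod_pow n).mul_left C))
  exact mul_le_mul_of_nonneg_left (prod_le_pow_norm l) hC

lemma integrable_pow_inv {n k : ℕ} (h : n < k) :
    Integrable (fun y : E n => ((1 + ‖y‖) ^ k)⁻¹) := by
  have h2 := integrable_one_add_norm (E := E n) (μ := volume) (r := (k : ℝ))
    (by rw [finrank_euclideanSpace_fin]; exact_mod_cast h)
  refine h2.congr (Filter.Eventually.of_forall fun y => ?_)
  have : ((1:ℝ) + ‖y‖) ^ (-(k:ℝ)) = ((1 + ‖y‖) ^ k)⁻¹ := by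
    rw [Real.rpow_neg (by positivity : (0:ℝ) ≤ 1 + ‖y‖), Real.rpow_natCast]
  exact this

lemma pow_mul_pow_le {r s u : ℝ} (hr : 0 ≤ r) (hs : 0 ≤ s) (hru : r ≤ u) (hsu : s ≤ u)
    (a b : ℕ) : (1 + r) ^ a * (1 + s) ^ b ≤ (1 + u) ^ (a + b) := by
  rw [pow_add]
  exact mul_le_mul (pow_le_pow_left₀ (by linarith) (by linarith) a)
    (pow_le_pow_left₀ (by linarith) (by linarith) b) (pow_nonneg (by linarith) b)
    (pow_nonneg (by linarith) a)

lemma inv_pow_split {r s u : ℝ} (hr : 0 ≤ r) (hs : 0 ≤ s) (hru : r ≤ u) (hsu : s ≤ u)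
    (a b : ℕ) : ((1 + u) ^ (a + b))⁻¹ ≤ ((1 + r) ^ a)⁻¹ * ((1 + s) ^ b)⁻¹ := by
  rw [← mul_inv]
  exact inv_anti₀ (by positivity) (pow_mul_pow_le hr hs hru hsu a b)


lemma hasTemperateGrowth_affine {V W : Type*} [NormedAddCommGroup V] [NormedSpace ℝ V]
    [NormedAddCommGroup W] [NormedSpace ℝ W] (A : V →L[ℝ] W) (c : W) :
    Function.HasTemperateGrowth (fun x => A x + c) := by
  apply Function.HasTemperateGrowth.of_fderiv (k := 1) (C := ‖A‖ + ‖c‖)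
  · have : (fderiv ℝ fun x => A x + c) = fun _ => A := by
      funext x
      rw [fderiv_add_const]
      exact A.fderiv
    rw [this]
    exact Function.HasTemperateGrowth.const _
  · exact (A.differentiable).add_const c
  · intro x
    calc ‖A x + c‖ ≤ ‖A x‖ + ‖c‖ := norm_add_le _ _
      _ ≤ ‖A‖ * ‖x‖ + ‖c‖ := by gcongr; exact A.le_opNorm x
      _ ≤ (‖A‖ + ‖c‖) * (1 + ‖x‖) ^ 1 := by
          have h1 : (0:ℝ) ≤ ‖A‖ := norm_nonneg _
          have h2 : (0:ℝ) ≤ ‖c‖ := norm_nonneg _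
          have h3 : (0:ℝ) ≤ ‖x‖ := norm_nonneg _
          nlinarith

/-- the continuous linear map `t ↦ consE t 0` -/
def consL (n : ℕ) : ℝ →L[ℝ] E (n + 1) :=
  LinearMap.toContinuousLinearMap
    { toFun := fun t => consE t 0
      map_add' := fun s t => by
        ext i
        refine Fin.cases ?_ (fun j => ?_) i <;> simp [consE]
      map_smul' := fun s t => by
        ext i
        refine Fin.cases ?_ (fun j => ?_) i <;> simp [consE] }

/-- the continuous linear map `y ↦ consE 0 y` -/
def consR (n : ℕ) : E n →L[ℝ] E (n + 1) :=
  LinearMap.toContinuousLinearMap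
    { toFun := fun y => consE 0 y
      map_add' := fun v w => by
        ext i
        refine Fin.cases ?_ (fun j => ?_) i <;> simp [consE]
      map_smul' := fun s v => by
        ext i
        refine Fin.cases ?_ (fun j => ?_) i <;> simp [consE] }

lemma consE_eq_left {n : ℕ} (y : E n) : (fun t : ℝ => consE t y) = fun t => consL n t + consE 0 y := by
  funext t; ext i
  refine Fin.cases ?_ (fun j => ?_) i <;> simp [consL, consE, LinearMap.toContinuousLinearMap]

lemma consE_eq_right {n : ℕ} (t : ℝ) : (fun y : E n => consE t y) = fun y => consR n y + consE t 0 := by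
  funext y; ext i
  refine Fin.cases ?_ (fun j => ?_) i <;> simp [consR, consE, LinearMap.toContinuousLinearMap]

lemma htg_left {n : ℕ} (y : E n) : Function.HasTemperateGrowth (fun t : ℝ => consE t y) := by
  rw [consE_eq_left]; exact hasTemperateGrowth_affine _ _

lemma htg_right {n : ℕ} (t : ℝ) : Function.HasTemperateGrowth (fun y : E n => consE t y) := by
  rw [consE_eq_right]; exact hasTemperateGrowth_affine _ _

lemma anti_left {n : ℕ} (y : E n) : AntilipschitzWith 1 (fun t : ℝ => consE t y) := by
  refine AntilipschitzWith.of_le_mul_dist fun s t => ?_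
  rw [NNReal.coe_one, one_mul, dist_eq_norm, dist_eq_norm]
  have h : (consE s y - consE t y) 0 = s - t := by simp [consE]
  calc ‖s - t‖ = |(consE s y - consE t y) 0| := by rw [h]; exact (Real.norm_eq_abs _)
    _ ≤ ‖consE s y - consE t y‖ := abs_coord_le _ 0

lemma anti_right {n : ℕ} (t : ℝ) : AntilipschitzWith 1 (fun y : E n => consE t y) := by
  refine AntilipschitzWith.of_le_mul_dist fun v w => ?_
  rw [NNReal.coe_one, one_mul, dist_eq_norm, dist_eq_norm]
  have h : tailE (consE t v - consE t w) = v - w := by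
    ext i; simp [tailE, consE]
  calc ‖v - w‖ = ‖tailE (consE t v - consE t w)‖ := by rw [h]
    _ ≤ ‖consE t v - consE t w‖ := norm_tail_le _

/-- restriction of a Schwartz function to a hyperplane slice -/
def sliceR {n : ℕ} (f : 𝓢(E (n+1), ℂ)) (t : ℝ) : 𝓢(E n, ℂ) :=
  SchwartzMap.compCLMOfAntilipschitz ℝ (htg_right t) (anti_right t) f

@[simp] lemma sliceR_apply {n : ℕ} (f : 𝓢(E (n+1), ℂ)) (t : ℝ) (y : E n) :
    sliceR f t y = f (consE t y) := rfl


/-- the measurable equivalence `ℝ × ℝⁿ ≃ ℝⁿ⁺¹`, measure preserving -/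
def mEquiv (n : ℕ) : (ℝ × (Fin n → ℝ)) ≃ᵐ E (n+1) :=
  ((MeasurableEquiv.piFinSuccAbove (fun _ : Fin (n+1) => ℝ) 0).symm).trans
    (MeasurableEquiv.toLp 2 (Fin (n+1) → ℝ))

lemma mEquiv_measurePreserving (n : ℕ) :
    MeasurePreserving (mEquiv n) (volume.prod volume) volume := by
  have h1 := (measurePreserving_piFinSuccAbove (fun _ : Fin (n+1) => (volume : Measure ℝ)) 0).symm
  have h2 := (EuclideanSpace.volume_preserving_symm_measurableEquiv_toLp (Fin (n+1))).symm
  have h3 : (volume : Measure (Fin (n+1) → ℝ)) = Measure.pi fun _ => volume := volume_pi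
  rw [show ⇑(mEquiv n) = ⇑(MeasurableEquiv.toLp 2 (Fin (n+1) → ℝ)) ∘
      ⇑(MeasurableEquiv.piFinSuccAbove (fun _ : Fin (n+1) => ℝ) 0).symm from rfl]
  refine MeasurePreserving.comp h2 ?_
  have h4 : (volume : Measure (Fin n → ℝ)) = Measure.pi fun _ => volume := volume_pi
  rw [h3, h4]
  exact h1

lemma mEquiv_apply {n : ℕ} (t : ℝ) (y : Fin n → ℝ) :
    mEquiv n (t, y) = consE t (toE y) := by
  show (MeasurableEquiv.toLp 2 (Fin (n+1) → ℝ))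
      ((MeasurableEquiv.piFinSuccAbove (fun _ : Fin (n+1) => ℝ) 0).symm (t, y)) = _
  have h : (MeasurableEquiv.piFinSuccAbove (fun _ : Fin (n+1) => ℝ) 0).symm (t, y)
      = Fin.cons t y := by
    show (Fin.insertNthEquiv (fun _ : Fin (n+1) => ℝ) 0) (t, y) = Fin.cons t y
    rw [Fin.insertNthEquiv_zero]
    rfl
  rw [h]
  rfl

lemma integrable_comp_prod {n : ℕ} {g : E (n+1) → ℂ} (hg : Integrable g) :
    Integrable (fun p : ℝ × (Fin n → ℝ) => g (consE p.1 (toE p.2))) (volume.prod volume) := by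
  have := ((mEquiv_measurePreserving n).integrable_comp_emb
    (mEquiv n).measurableEmbedding).2 hg
  refine this.congr (Filter.Eventually.of_forall fun p => ?_)
  rw [Function.comp_apply, mEquiv_apply]

lemma integral_comp_prod {n : ℕ} (g : E (n+1) → ℂ) :
    ∫ x, g x = ∫ p : ℝ × (Fin n → ℝ), g (consE p.1 (toE p.2)) ∂(volume.prod volume) := by
  rw [← (mEquiv_measurePreserving n).integral_comp' g]
  congr 1
  funext p
  rw [mEquiv_apply]

lemma integral_toE {n : ℕ} (g : E n → ℂ) : ∫ y : Fin n → ℝ, g (toE y) = ∫ y : E n, g y := by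
  have h := (EuclideanSpace.volume_preserving_symm_measurableEquiv_toLp (Fin n)).symm
  exact h.integral_comp' g

lemma continuous_toE {n : ℕ} : Continuous (toE (n := n)) :=
  PiLp.continuous_toLp 2 (fun _ : Fin n => ℝ)

/-- slicing the Fourier integral: Fubini -/
lemma fourier_slice {n : ℕ} (f : 𝓢(E (n+1), ℂ)) (ξ : E n) (κ : ℝ) :
    𝓕 (⇑f) (consE κ ξ) = 𝓕 (fun t => 𝓕 (⇑(sliceR f t)) ξ) κ := by
  rw [Real.fourier_eq']
  rw [integral_comp_prod (fun x => Complex.exp (↑(-2 * π * ⟪x, consE κ ξ⟫) * Complex.I) • f x)]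
  have hInt : Integrable (fun p : ℝ × (Fin n → ℝ) =>
      Complex.exp (↑(-2 * π * ⟪consE p.1 (toE p.2), consE κ ξ⟫) * Complex.I)
        • f (consE p.1 (toE p.2))) (volume.prod volume) := by
    simp_rw [smul_eq_mul]
    apply (integrable_comp_prod f.integrable).bdd_mul (c := 1)
    · apply Continuous.aestronglyMeasurable
      apply Complex.continuous_exp.comp
      apply Continuous.mul ?_ continuous_const
      apply Continuous.comp Complex.continuous_ofReal
      apply Continuous.mul continuous_const
      simp_rw [inner_consE]
      exact (continuous_fst.mul continuous_const).add
        ((continuous_toE.comp continuous_snd).inner continuous_const)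
    · exact Filter.Eventually.of_forall fun p => by rw [Complex.norm_exp_ofReal_mul_I]
  rw [MeasureTheory.integral_prod _ hInt]
  rw [Real.fourier_eq']
  congr 1
  funext t
  dsimp only
  have hsplit : ∀ y : Fin n → ℝ,
      Complex.exp (↑(-2 * π * ⟪consE t (toE y), consE κ ξ⟫) * Complex.I)
        • f (consE t (toE y))
      = Complex.exp (↑(-2 * π * (inner ℝ t κ : ℝ)) * Complex.I) •
        (Complex.exp (↑(-2 * π * ⟪toE y, ξ⟫) * Complex.I) • f (consE t (toE y))) := by
    intro y
    rw [inner_consE, smul_smul, ← Complex.exp_add]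
    congr 2
    have h5 : (inner ℝ t κ : ℝ) = t * κ := by
      simp [RCLike.inner_apply]
      ring
    rw [h5]
    push_cast
    ring
  simp_rw [hsplit]
  rw [MeasureTheory.integral_smul]
  congr 1
  rw [Real.fourier_eq']
  simp_rw [sliceR_apply]
  exact integral_toE (fun y => Complex.exp (↑(-2 * π * ⟪y, ξ⟫) * Complex.I) • f (consE t y))


/-- the partial Fourier transform in all but the first variable -/
def wf {n : ℕ} (f : 𝓢(E (n+1), ℂ)) (ξ : E n) : ℝ → ℂ := fun t => 𝓕 (⇑(sliceR f t)) ξ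

lemma continuous_consE_left {n : ℕ} (y : E n) : Continuous (fun t : ℝ => consE t y) := by
  rw [consE_eq_left]; exact ((consL n).continuous).add continuous_const

lemma continuous_consE_right {n : ℕ} (t : ℝ) : Continuous (fun y : E n => consE t y) := by
  rw [consE_eq_right]; exact ((consR n).continuous).add continuous_const

lemma integrable_pow_inv_real {k : ℕ} (h : 1 < k) :
    Integrable (fun t : ℝ => ((1 + |t|) ^ k)⁻¹) := by
  have h2 := integrable_one_add_norm (E := ℝ) (μ := volume) (r := (k : ℝ))
    (by simp; exact_mod_cast h)
  refine h2.congr (Filter.Eventually.of_forall fun t => ?_)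
  have : ((1:ℝ) + ‖t‖) ^ (-(k:ℝ)) = ((1 + |t|) ^ k)⁻¹ := by
    rw [Real.norm_eq_abs, Real.rpow_neg (by positivity : (0:ℝ) ≤ 1 + |t|), Real.rpow_natCast]
  exact this

lemma wf_continuous {n : ℕ} (f : 𝓢(E (n+1), ℂ)) (ξ : E n) : Continuous (wf f ξ) := by
  obtain ⟨C, hC0, hC⟩ := schwartz_decay f (n+1)
  unfold wf
  simp_rw [Real.fourier_eq', sliceR_apply]
  apply continuous_of_dominated (bound := fun y : E n => C * ((1 + ‖y‖) ^ (n+1))⁻¹)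
  · intro t
    apply Continuous.aestronglyMeasurable
    apply Continuous.fun_smul ?_ (f.continuous.comp (continuous_consE_right t))
    exact Complex.continuous_exp.comp ((Complex.continuous_ofReal.comp
      ((continuous_const.mul ((continuous_id.inner continuous_const))))).mul continuous_const)
  · intro t
    refine Filter.Eventually.of_forall fun y => ?_
    rw [norm_smul, Complex.norm_exp_ofReal_mul_I, one_mul]
    refine (hC _).trans ?_
    have hyn := norm_le_norm_consE t y
    gcongr
  · exact (integrable_pow_inv (Nat.lt_succ_self n)).const_mul C
  · refine Filter.Eventually.of_forall fun y => ?_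
    exact continuous_const.fun_smul (f.continuous.comp (continuous_consE_left y))

lemma wf_bound {n : ℕ} (f : 𝓢(E (n+1), ℂ)) (a : ℕ) :
    ∃ C : ℝ, 0 ≤ C ∧ ∀ (ξ : E n) (t : ℝ), ‖wf f ξ t‖ ≤ C * ((1 + |t|) ^ a)⁻¹ := by
  obtain ⟨C, hC0, hC⟩ := schwartz_decay f ((n+1) + a)
  set I0 : ℝ := ∫ y : E n, ((1 + ‖y‖) ^ (n+1))⁻¹ with hI0
  have hI0nn : 0 ≤ I0 := integral_nonneg fun y => by positivity
  refine ⟨C * I0, by positivity, fun ξ t => ?_⟩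
  have key : ∀ y : E n, ‖f (consE t y)‖ ≤
      (C * ((1 + |t|) ^ a)⁻¹) * ((1 + ‖y‖) ^ (n+1))⁻¹ := by
    intro y
    refine (hC _).trans ?_
    have := inv_pow_split (norm_nonneg y) (abs_nonneg t)
      (norm_le_norm_consE t y) (abs_le_norm_consE t y) (n+1) a
    calc C * ((1 + ‖consE t y‖) ^ ((n+1) + a))⁻¹
        ≤ C * (((1 + ‖y‖) ^ (n+1))⁻¹ * ((1 + |t|) ^ a)⁻¹) := by gcongr
      _ = (C * ((1 + |t|) ^ a)⁻¹) * ((1 + ‖y‖) ^ (n+1))⁻¹ := by ring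
  have h1 : ‖wf f ξ t‖ ≤ ∫ y : E n, ‖f (consE t y)‖ := by
    unfold wf
    rw [Real.fourier_eq']
    refine (norm_integral_le_integral_norm _).trans ?_
    have hR : Integrable (fun y : E n => ‖f (consE t y)‖) :=
      ((integrable_pow_inv (Nat.lt_succ_self n)).const_mul (C * ((1 + |t|) ^ a)⁻¹)).mono'
        ((f.continuous.comp (continuous_consE_right t)).norm.aestronglyMeasurable)
        (Filter.Eventually.of_forall fun y => by rw [norm_norm]; exact key y)
    apply integral_mono_of_nonneg (Filter.Eventually.of_forall fun y => norm_nonneg _) hR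
    refine Filter.Eventually.of_forall fun y => ?_
    dsimp only
    rw [norm_smul, Complex.norm_exp_ofReal_mul_I, one_mul, sliceR_apply]
  refine h1.trans ?_
  calc ∫ y : E n, ‖f (consE t y)‖
      ≤ ∫ y : E n, (C * ((1 + |t|) ^ a)⁻¹) * ((1 + ‖y‖) ^ (n+1))⁻¹ := by
        apply integral_mono_of_nonneg (Filter.Eventually.of_forall fun y => norm_nonneg _)
          (((integrable_pow_inv (Nat.lt_succ_self n)).const_mul _))
          (Filter.Eventually.of_forall key)
    _ = (C * ((1 + |t|) ^ a)⁻¹) * I0 := by rw [integral_const_mul]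
    _ = (C * I0) * ((1 + |t|) ^ a)⁻¹ := by ring

lemma wf_integrable {n : ℕ} (f : 𝓢(E (n+1), ℂ)) (ξ : E n) : Integrable (wf f ξ) := by
  obtain ⟨C, hC0, hC⟩ := wf_bound f 2
  refine (((integrable_pow_inv_real one_lt_two).const_mul C).mono'
    ((wf_continuous f ξ).aestronglyMeasurable) ?_)
  exact Filter.Eventually.of_forall fun t => hC ξ t

lemma fourier_wf_eq {n : ℕ} (f : 𝓢(E (n+1), ℂ)) (ξ : E n) :
    𝓕 (wf f ξ) = fun κ : ℝ => (SchwartzMap.fourierTransformCLM ℝ f) (consE κ ξ) := by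
  funext κ
  unfold wf
  rw [← fourier_slice, SchwartzMap.fourierTransformCLM_apply, SchwartzMap.fourier_coe]

lemma fourier_wf_integrable {n : ℕ} (f : 𝓢(E (n+1), ℂ)) (ξ : E n) :
    Integrable (𝓕 (wf f ξ)) := by
  rw [fourier_wf_eq]
  set p := SchwartzMap.fourierTransformCLM ℝ f
  obtain ⟨C, hC0, hC⟩ := schwartz_decay p (2 + 0)
  refine (((integrable_pow_inv_real one_lt_two).const_mul C).mono'
    ((p.continuous.comp (continuous_consE_left ξ)).aestronglyMeasurable) ?_)
  refine Filter.Eventually.of_forall fun κ => ?_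
  refine (hC _).trans ?_
  have := inv_pow_split (abs_nonneg κ) (norm_nonneg ξ)
    (abs_le_norm_consE κ ξ) (norm_le_norm_consE κ ξ) 2 0
  calc C * ((1 + ‖consE κ ξ‖) ^ (2 + 0))⁻¹
      ≤ C * (((1 + |κ|) ^ 2)⁻¹ * ((1 + ‖ξ‖) ^ 0)⁻¹) := by gcongr
    _ = C * ((1 + |κ|) ^ 2)⁻¹ := by norm_num
  
/-- second bound: decay in `ξ`, uniformly in `t` -/
lemma wf_bound2 {n : ℕ} (f : 𝓢(E (n+1), ℂ)) (b : ℕ) :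
    ∃ C : ℝ, 0 ≤ C ∧ ∀ (ξ : E n) (t : ℝ), ‖wf f ξ t‖ ≤ C * ((1 + ‖ξ‖) ^ b)⁻¹ := by
  set p := SchwartzMap.fourierTransformCLM ℝ f
  obtain ⟨C, hC0, hC⟩ := schwartz_decay p (2 + b)
  set J0 : ℝ := ∫ t : ℝ, ((1 + |t|) ^ 2)⁻¹ with hJ0
  have hJ0nn : 0 ≤ J0 := integral_nonneg fun y => by positivity
  refine ⟨C * J0, by positivity, fun ξ t => ?_⟩
  have hinv : wf f ξ t = 𝓕⁻ (𝓕 (wf f ξ)) t :=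
    ((wf_integrable f ξ).fourierInv_fourier_eq (fourier_wf_integrable f ξ)
      ((wf_continuous f ξ).continuousAt)).symm
  rw [hinv, Real.fourierInv_eq]
  refine (norm_integral_le_integral_norm _).trans ?_
  have key : ∀ κ : ℝ, ‖𝓕 (wf f ξ) κ‖ ≤
      (C * ((1 + ‖ξ‖) ^ b)⁻¹) * ((1 + |κ|) ^ 2)⁻¹ := by
    intro κ
    rw [fourier_wf_eq]
    refine (hC _).trans ?_
    have := inv_pow_split (abs_nonneg κ) (norm_nonneg ξ)
      (abs_le_norm_consE κ ξ) (norm_le_norm_consE κ ξ) 2 b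
    calc C * ((1 + ‖consE κ ξ‖) ^ (2 + b))⁻¹
        ≤ C * (((1 + |κ|) ^ 2)⁻¹ * ((1 + ‖ξ‖) ^ b)⁻¹) := by gcongr
      _ = (C * ((1 + ‖ξ‖) ^ b)⁻¹) * ((1 + |κ|) ^ 2)⁻¹ := by ring
  calc ∫ κ : ℝ, ‖𝐞 ⟪κ, t⟫ • 𝓕 (wf f ξ) κ‖
      = ∫ κ : ℝ, ‖𝓕 (wf f ξ) κ‖ := by
        congr 1; funext κ; rw [Circle.norm_smul]
    _ ≤ ∫ κ : ℝ, (C * ((1 + ‖ξ‖) ^ b)⁻¹) * ((1 + |κ|) ^ 2)⁻¹ := by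
        apply integral_mono_of_nonneg (Filter.Eventually.of_forall fun κ => norm_nonneg _)
          (((integrable_pow_inv_real one_lt_two).const_mul _))
          (Filter.Eventually.of_forall key)
    _ = (C * ((1 + ‖ξ‖) ^ b)⁻¹) * J0 := by rw [integral_const_mul]
    _ = (C * J0) * ((1 + ‖ξ‖) ^ b)⁻¹ := by ring

/-- big-O statement from a polynomial bound -/
lemma isBigO_of_bound {g : ℝ → ℂ} {C : ℝ} (h : ∀ t, ‖g t‖ ≤ C * ((1 + |t|) ^ 2)⁻¹) :
    g =O[Filter.cocompact ℝ] (|·| ^ (-2 : ℝ)) := by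
  have hC : 0 ≤ C := le_trans (norm_nonneg (g 0)) (by simpa using h 0)
  rw [Asymptotics.isBigO_iff]
  refine ⟨C, ?_⟩
  have hev : {t : ℝ | 1 ≤ |t|} ∈ Filter.cocompact ℝ := by
    rw [Filter.mem_cocompact]
    refine ⟨Metric.closedBall 0 1, isCompact_closedBall 0 1, fun t ht => ?_⟩
    simp only [Set.mem_compl_iff, Metric.mem_closedBall, dist_zero_right, Real.norm_eq_abs,
      not_le] at ht
    exact le_of_lt ht
  filter_upwards [hev] with t ht
  have h1 : (0:ℝ) < |t| := lt_of_lt_of_le one_pos ht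
  have h2 : |t| ^ (-2:ℝ) = (|t| ^ 2)⁻¹ := by
    rw [show (-2:ℝ) = -((2:ℕ):ℝ) by norm_num, Real.rpow_neg (abs_nonneg t), Real.rpow_natCast]
  rw [Real.norm_eq_abs, h2, _root_.abs_of_nonneg (by positivity : (0:ℝ) ≤ (|t|^2)⁻¹)]
  refine (h t).trans ?_
  have h3 : |t| ≤ 1 + |t| := by linarith
  gcongr


lemma fourier_wf_bound {n : ℕ} (f : 𝓢(E (n+1), ℂ)) :
    ∃ C : ℝ, 0 ≤ C ∧ ∀ (ξ : E n) (κ : ℝ), ‖𝓕 (wf f ξ) κ‖ ≤ C * ((1 + |κ|) ^ 2)⁻¹ := by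
  set p := SchwartzMap.fourierTransformCLM ℝ f
  obtain ⟨C, hC0, hC⟩ := schwartz_decay p (2 + 0)
  refine ⟨C, hC0, fun ξ κ => ?_⟩
  rw [fourier_wf_eq]
  refine (hC _).trans ?_
  have := inv_pow_split (abs_nonneg κ) (norm_nonneg ξ)
    (abs_le_norm_consE κ ξ) (norm_le_norm_consE κ ξ) 2 0
  calc C * ((1 + ‖consE κ ξ‖) ^ (2 + 0))⁻¹
      ≤ C * (((1 + |κ|) ^ 2)⁻¹ * ((1 + ‖ξ‖) ^ 0)⁻¹) := by gcongr
    _ = C * ((1 + |κ|) ^ 2)⁻¹ := by norm_num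

lemma sqrt_inv_pow (r : ℝ) (m : ℕ) (h : 0 ≤ r) :
    Real.sqrt (((1 + r) ^ (2 * m))⁻¹) = ((1 + r) ^ m)⁻¹ := by
  rw [Real.sqrt_inv, show (2 * m) = m * 2 by ring, pow_mul, Real.sqrt_sq (by positivity)]

set_option maxHeartbeats 1000000 in
/-- The core theorem: Poisson summation for Schwartz functions on ℝⁿ. -/
theorem poisson_core : ∀ (n : ℕ) (f : 𝓢(E n, ℂ)),
    ∑' l : Fin n → ℤ, 𝓕 (⇑f) (zc l) = ∑' l : Fin n → ℤ, f (zc l) := by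
  intro n
  induction n with
  | zero =>
    intro f
    have huniq : ∀ x y : E 0, x = y := fun x y => PiLp.ext fun i => i.elim0
    have hvol : (volume : Measure (E 0)) Set.univ = 1 := by
      have h := (EuclideanSpace.volume_preserving_symm_measurableEquiv_toLp (Fin 0)).measure_preimage
        (MeasurableSet.univ (α := Fin 0 → ℝ)).nullMeasurableSet
      calc (volume : Measure (E 0)) Set.univ
          = volume ((MeasurableEquiv.toLp 2 (Fin 0 → ℝ)).symm ⁻¹' Set.univ) := by
            rw [Set.preimage_univ]
        _ = (volume : Measure (Fin 0 → ℝ)) Set.univ := h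
        _ = 1 := by rw [volume_pi, Measure.pi_univ]; simp
    have key : ∀ g : 𝓢(E 0, ℂ), ∀ w : E 0, 𝓕 (⇑g) w = g w := by
      intro g w
      rw [Real.fourier_eq]
      have hone : ∀ v : E 0, 𝐞 (-⟪v, w⟫) • g v = g w := by
        intro v
        have h0 : ⟪v, w⟫ = 0 := by
          simp [PiLp.inner_apply]
        rw [h0, huniq v w]
        norm_num
      rw [show (fun v => 𝐞 (-⟪v, w⟫) • g v) = fun _ : E 0 => g w from funext hone]
      rw [integral_const, measureReal_def, hvol]
      simp
    rw [tsum_eq_single 0 (fun b hb => absurd (funext fun i => i.elim0) hb),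
      tsum_eq_single 0 (fun b hb => absurd (funext fun i => i.elim0) hb)]
    exact key f (zc 0)
  | succ n IH =>
    intro f
    set p := SchwartzMap.fourierTransformCLM ℝ f with hpdef
    have hp : ∀ x, 𝓕 (⇑f) x = p x := fun x => by
      rw [hpdef, SchwartzMap.fourierTransformCLM_apply, SchwartzMap.fourier_coe]
    -- the reindexing equivalence
    set e : (Fin n → ℤ) × ℤ ≃ (Fin (n+1) → ℤ) :=
      (Equiv.prodComm (Fin n → ℤ) ℤ).trans (Fin.consEquiv fun _ => ℤ) with hedef
    have he : ∀ q : (Fin n → ℤ) × ℤ, e q = Fin.cons q.2 q.1 := fun q => rfl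
    -- summability of `𝓕 f` on the lattice
    have Sp : Summable fun m : Fin (n+1) → ℤ => 𝓕 (⇑f) (zc m) := by
      apply Summable.of_norm
      refine (schwartz_summable p).congr fun m => ?_
      rw [hp]
    -- joint bound for `wf`
    obtain ⟨C1, hC1, h1⟩ := wf_bound f 4
    obtain ⟨C2, hC2, h2⟩ := wf_bound2 f (2 * (2 * n))
    have hjoint : ∀ q : (Fin n → ℤ) × ℤ, ‖wf f (zc q.1) (q.2 : ℝ)‖ ≤
        Real.sqrt (C1 * C2) *
          ((∏ i, ((1 + |(q.1 i : ℝ)|) ^ 2)⁻¹) * ((1 + |(q.2 : ℝ)|) ^ 2)⁻¹) := by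
      rintro ⟨l, k⟩
      have h0 : (0:ℝ) ≤ ‖wf f (zc l) (k : ℝ)‖ := norm_nonneg _
      have ha := h1 (zc l) (k : ℝ)
      have hb := h2 (zc l) (k : ℝ)
      calc ‖wf f (zc l) (k : ℝ)‖
          = Real.sqrt (‖wf f (zc l) (k : ℝ)‖ * ‖wf f (zc l) (k : ℝ)‖) :=
            (Real.sqrt_mul_self h0).symm
        _ ≤ Real.sqrt ((C1 * ((1 + |(k : ℝ)|) ^ 4)⁻¹) * (C2 * ((1 + ‖zc l‖) ^ (2 * (2 * n)))⁻¹)) := by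
            apply Real.sqrt_le_sqrt
            exact mul_le_mul ha hb h0 (by positivity)
        _ = Real.sqrt (C1 * C2) * (Real.sqrt (((1 + |(k : ℝ)|) ^ 4)⁻¹) *
              Real.sqrt (((1 + ‖zc l‖) ^ (2 * (2 * n)))⁻¹)) := by
            rw [← Real.sqrt_mul (by positivity), ← Real.sqrt_mul (by positivity)]
            congr 1
            ring
        _ = Real.sqrt (C1 * C2) * (((1 + |(k : ℝ)|) ^ 2)⁻¹ * ((1 + ‖zc l‖) ^ (2 * n))⁻¹) := by
            rw [show (4 : ℕ) = 2 * 2 by norm_num, sqrt_inv_pow _ 2 (abs_nonneg _),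
              sqrt_inv_pow _ (2 * n) (norm_nonneg _)]
        _ ≤ Real.sqrt (C1 * C2) *
              ((∏ i, ((1 + |(l i : ℝ)|) ^ 2)⁻¹) * ((1 + |(k : ℝ)|) ^ 2)⁻¹) := by
            rw [mul_comm (((1 + |(k : ℝ)|) ^ 2)⁻¹)]
            have hpl := prod_le_pow_norm l
            have hs := Real.sqrt_nonneg (C1 * C2)
            gcongr
    have SW : Summable fun q : (Fin n → ℤ) × ℤ => ‖wf f (zc q.1) (q.2 : ℝ)‖ := by
      apply Summable.of_nonneg_of_le (fun q => norm_nonneg _) hjoint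
      exact ((summable_prod_pow n).mul_of_nonneg summable_int_pow
        (fun l => by positivity) (fun k => by positivity)).mul_left _
    have SW' : Summable fun q : (Fin n → ℤ) × ℤ => wf f (zc q.1) (q.2 : ℝ) := SW.of_norm
    have SpE : Summable fun q : (Fin n → ℤ) × ℤ => 𝓕 (⇑f) (zc (e q)) :=
      e.summable_iff.2 Sp
    have SFW : Summable fun q : (Fin n → ℤ) × ℤ => 𝓕 (wf f (zc q.1)) (q.2 : ℝ) := by
      refine SpE.congr fun q => ?_
      rw [he, zc_cons, fourier_slice]
      rfl
    -- summability of f on the lattice, transported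
    have Sf : Summable fun q : (Fin n → ℤ) × ℤ => f (zc (e q)) := by
      apply Summable.of_norm
      exact (e.summable_iff.2 (schwartz_summable f))
    calc ∑' m : Fin (n+1) → ℤ, 𝓕 (⇑f) (zc m)
        = ∑' q : (Fin n → ℤ) × ℤ, 𝓕 (⇑f) (zc (e q)) := (e.tsum_eq _).symm
      _ = ∑' q : (Fin n → ℤ) × ℤ, 𝓕 (wf f (zc q.1)) (q.2 : ℝ) := by
          apply tsum_congr
          intro q
          rw [he, zc_cons, fourier_slice]
          rfl
      _ = ∑' (l : Fin n → ℤ) (k : ℤ), 𝓕 (wf f (zc l)) (k : ℝ) :=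
          Summable.tsum_prod' SFW (fun l => SFW.prod_factor l)
      _ = ∑' (l : Fin n → ℤ) (k : ℤ), wf f (zc l) (k : ℝ) := by
          apply tsum_congr
          intro l
          obtain ⟨C3, hC3, h3⟩ := fourier_wf_bound f
          obtain ⟨C4, hC4, h4⟩ := wf_bound f 2
          have hpois := Real.tsum_eq_tsum_fourier_of_rpow_decay
            (wf_continuous f (zc l)) one_lt_two
            (isBigO_of_bound (fun t => h4 (zc l) t))
            (isBigO_of_bound (fun κ => h3 (zc l) κ)) 0
          simp only [zero_add, QuotientAddGroup.mk_zero, fourier_eval_zero, mul_one] at hpois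
          exact hpois.symm
      _ = ∑' (k : ℤ) (l : Fin n → ℤ), wf f (zc l) (k : ℝ) :=
          (Summable.tsum_comm' (f := fun (l : Fin n → ℤ) (k : ℤ) => wf f (zc l) (k : ℝ)) SW'
            (fun l => SW'.prod_factor l) (fun k => SW'.prod_symm.prod_factor k)).symm
      _ = ∑' (k : ℤ) (l : Fin n → ℤ), sliceR f (k : ℝ) (zc l) := by
          apply tsum_congr; intro k
          exact IH (sliceR f (k : ℝ))
      _ = ∑' (k : ℤ) (l : Fin n → ℤ), f (zc (e (l, k))) := by
          apply tsum_congr; intro k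
          apply tsum_congr; intro l
          rw [sliceR_apply, he, zc_cons]
      _ = ∑' (l : Fin n → ℤ) (k : ℤ), f (zc (e (l, k))) :=
          Summable.tsum_comm' (f := fun (l : Fin n → ℤ) (k : ℤ) => f (zc (e (l, k)))) Sf
            (fun l => Sf.prod_factor l) (fun k => Sf.prod_symm.prod_factor k)
      _ = ∑' q : (Fin n → ℤ) × ℤ, f (zc (e q)) :=
          (Summable.tsum_prod' Sf (fun l => Sf.prod_factor l)).symm
      _ = ∑' m : Fin (n+1) → ℤ, f (zc m) := e.tsum_eq (fun m => f (zc m))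


section Basis
variable {n : ℕ} (B : Module.Basis (Fin n) ℝ (E n))

/-- the linear map `x ↦ ((2π)⁻¹ ⟪B i, x⟫)_i` -/
def M₀ : E n →ₗ[ℝ] E n where
  toFun x := WithLp.toLp 2 (fun i => (2 * π)⁻¹ * ⟪B i, x⟫)
  map_add' x y := by
    ext i
    show (2 * π)⁻¹ * ⟪B i, x + y⟫ = (2 * π)⁻¹ * ⟪B i, x⟫ + (2 * π)⁻¹ * ⟪B i, y⟫
    rw [inner_add_right]; ring
  map_smul' c x := by
    ext i
    show (2 * π)⁻¹ * ⟪B i, c • x⟫ = c * ((2 * π)⁻¹ * ⟪B i, x⟫)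
    rw [real_inner_smul_right]; ring

@[simp] lemma M₀_apply (x : E n) (i : Fin n) : M₀ B x i = (2 * π)⁻¹ * ⟪B i, x⟫ := rfl

lemma M₀_injective : Function.Injective (M₀ B) := by
  intro a b hab
  have hsub : M₀ B (a - b) = 0 := by rw [map_sub, hab, sub_self]
  have hBi : ∀ i, ⟪B i, a - b⟫ = 0 := by
    intro i
    have := congrFun (congrArg WithLp.ofLp hsub) i
    have h2 : (2 * π)⁻¹ * ⟪B i, a - b⟫ = 0 := this
    have hπ : (2 * π)⁻¹ ≠ 0 := by positivity
    exact (mul_eq_zero.1 h2).resolve_left hπ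
  have hall : ∀ y : E n, ⟪y, a - b⟫ = 0 := by
    intro y
    have hy := B.sum_repr y
    calc ⟪y, a - b⟫ = ⟪∑ i, B.repr y i • B i, a - b⟫ := by rw [hy]
      _ = ∑ i, B.repr y i * ⟪B i, a - b⟫ := by
          rw [sum_inner]
          exact Finset.sum_congr rfl fun i _ => real_inner_smul_left _ _ _
      _ = 0 := by simp [hBi]
  have : a - b = 0 := by
    have := hall (a - b)
    exact inner_self_eq_zero.1 this
  exact sub_eq_zero.1 this

lemma M₀_bijective : Function.Bijective (M₀ B) :=
  ⟨M₀_injective B, (LinearMap.injective_iff_surjective).1 (M₀_injective B)⟩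

/-- `M₀` as continuous linear equivalence -/
def Mcle : E n ≃L[ℝ] E n :=
  (LinearEquiv.ofBijective (M₀ B) (M₀_bijective B)).toContinuousLinearEquiv

@[simp] lemma Mcle_apply (x : E n) : Mcle B x = M₀ B x := rfl

lemma det_ne_zero : LinearMap.det (M₀ B) ≠ 0 := by
  have h := LinearEquiv.isUnit_det' (LinearEquiv.ofBijective (M₀ B) (M₀_bijective B))
  exact IsUnit.ne_zero h

/-- change of variables -/
lemma integral_comp_M (g : E n → ℂ) :
    ∫ x, g (Mcle B x) = |(LinearMap.det (M₀ B))⁻¹| • ∫ y, g y := by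
  have hemb : MeasurableEmbedding (Mcle B) :=
    (Mcle B).toHomeomorph.toMeasurableEquiv.measurableEmbedding
  have hmap : Measure.map (Mcle B) volume
      = ENNReal.ofReal |(LinearMap.det (M₀ B))⁻¹| • volume := by
    have := Measure.map_linearMap_addHaar_eq_smul_addHaar (μ := volume) (det_ne_zero B)
    rw [← this]
    rfl
  calc ∫ x, g (Mcle B x) = ∫ y, g y ∂(Measure.map (Mcle B) volume) :=
        (hemb.integral_map g).symm
    _ = ∫ y, g y ∂(ENNReal.ofReal |(LinearMap.det (M₀ B))⁻¹| • volume) := by rw [hmap]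
    _ = |(LinearMap.det (M₀ B))⁻¹| • ∫ y, g y := by
        rw [integral_smul_measure, ENNReal.toReal_ofReal (abs_nonneg _)]

end Basis
end PA

open PA

namespace PA
section Main
variable {n : ℕ} (B : Module.Basis (Fin n) ℝ (E n))

lemma inner_basis_eq (y : E n) (i : Fin n) : ⟪y, B i⟫ = 2 * π * (Mcle B y i) := by
  rw [Mcle_apply, M₀_apply, real_inner_comm]
  have hπ : (2 * π) ≠ 0 := by positivity
  field_simp

/-- the equivalence between `ℤⁿ` and the dual lattice -/
def dualEquiv : (Fin n → ℤ) ≃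
    {v : E n // ∀ i, ∃ m : ℤ, ⟪v, B i⟫ = 2 * π * m} := by
  refine Equiv.ofBijective (fun l => ⟨(Mcle B).symm (zc l), fun i => ⟨l i, ?_⟩⟩) ⟨?_, ?_⟩
  · rw [inner_basis_eq B ((Mcle B).symm (zc l)) i, (Mcle B).apply_symm_apply]
    rfl
  · intro l₁ l₂ h
    have h1 : (Mcle B).symm (zc l₁) = (Mcle B).symm (zc l₂) := congrArg Subtype.val h
    have h2 : (zc l₁ : E n) = zc l₂ := (Mcle B).symm.injective h1
    funext i
    have h3 : ((l₁ i : ℝ)) = ((l₂ i : ℝ)) := congrFun (congrArg WithLp.ofLp h2) i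
    exact_mod_cast h3
  · rintro ⟨v, hv⟩
    refine ⟨fun i => (hv i).choose, ?_⟩
    apply Subtype.ext
    show (Mcle B).symm (zc fun i => (hv i).choose) = v
    have hMv : (zc fun i => (hv i).choose : E n) = Mcle B v := by
      ext i
      show ((hv i).choose : ℝ) = Mcle B v i
      have hcs := (hv i).choose_spec
      have h5 : 2 * π * (Mcle B v i) = 2 * π * ((hv i).choose : ℝ) := by
        rw [← inner_basis_eq B v i]
        exact hcs
      exact (mul_left_cancel₀ (by positivity : (2 * π : ℝ) ≠ 0) h5).symm
    rw [hMv, (Mcle B).symm_apply_apply]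

lemma dualEquiv_apply (l : Fin n → ℤ) :
    ((dualEquiv B l : {v : E n // ∀ i, ∃ m : ℤ, ⟪v, B i⟫ = 2 * π * m}) : E n)
      = (Mcle B).symm (zc l) := rfl

end Main
end PA

/-- Distributional Poisson summation: for a full-rank lattice `L` in a finite-dimensional
real inner product space `H` (spanned over `ℤ` by an `ℝ`-basis `B`), the Fourier
transform of the counting measure `δ_L = ∑_{ℓ∈L} δ_ℓ` is, up to a positive constant, the
counting measure on the dual lattice `L* = {v | ⟪v,ℓ⟫ ∈ 2πℤ for all ℓ ∈ L}`.  Pairing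
both sides with an arbitrary Schwartz test function `f`, this says
`∑_{ℓ∈L} f̂(ℓ) = c ∑_{m∈L*} f(m)` with `f̂(ξ) = ∫ f(x) e^{−i⟪ξ,x⟫} dx`. -/
theorem stmt13 (n : ℕ) (B : Module.Basis (Fin n) ℝ (EuclideanSpace ℝ (Fin n))) :
    ∃ c : ℝ, 0 < c ∧
      ∀ f : SchwartzMap (EuclideanSpace ℝ (Fin n)) ℂ,
        ∑' ℓ : Fin n → ℤ,
          (∫ x : EuclideanSpace ℝ (Fin n),
            f x * Complex.exp (-(Complex.I * ((⟪∑ i, (ℓ i : ℝ) • B i, x⟫ : ℝ) : ℂ)))) =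
        (c : ℂ) * ∑' v : {v : EuclideanSpace ℝ (Fin n) //
            ∀ i, ∃ m : ℤ, ⟪v, B i⟫ = 2 * Real.pi * m}, f v := by
  have hdet := det_ne_zero B
  refine ⟨|(LinearMap.det (M₀ B))⁻¹|, abs_pos.2 (inv_ne_zero hdet), fun f => ?_⟩
  set c : ℝ := |(LinearMap.det (M₀ B))⁻¹| with hc
  set gS : 𝓢(E n, ℂ) := SchwartzMap.compCLMOfContinuousLinearEquiv ℝ (Mcle B).symm f with hgS
  have hgS_apply : ∀ y, gS y = f ((Mcle B).symm y) := fun y => rfl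
  have hphase : ∀ (l : Fin n → ℤ) (x : E n),
      f x * Complex.exp (-(Complex.I * ((⟪∑ i, (l i : ℝ) • B i, x⟫ : ℝ) : ℂ)))
      = Complex.exp (↑(-2 * π * ⟪Mcle B x, (zc l : E n)⟫) * Complex.I) • gS (Mcle B x) := by
    intro l x
    have h1 : ⟪∑ i, (l i : ℝ) • B i, x⟫ = 2 * π * ⟪(Mcle B x : E n), (zc l : E n)⟫ := by
      have h2 : ⟪(Mcle B x : E n), (zc l : E n)⟫
          = ∑ i, ((2 * π)⁻¹ * ⟪B i, x⟫) * (l i : ℝ) := by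
        rw [PiLp.inner_apply]
        apply Finset.sum_congr rfl
        intro i _
        simp [zc, RCLike.inner_apply]
        ring
      rw [h2, sum_inner, Finset.mul_sum]
      apply Finset.sum_congr rfl
      intro i _
      rw [real_inner_smul_left]
      have hπ : (2 * π) ≠ 0 := by positivity
      field_simp
    rw [hgS_apply, (Mcle B).symm_apply_apply, h1, smul_eq_mul, mul_comm]
    congr 1
    push_cast
    ring
  have hterm : ∀ l : Fin n → ℤ,
      (∫ x, f x * Complex.exp (-(Complex.I * ((⟪∑ i, (l i : ℝ) • B i, x⟫ : ℝ) : ℂ))))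
      = (c : ℂ) * 𝓕 (⇑gS) (zc l) := by
    intro l
    simp_rw [hphase l]
    rw [integral_comp_M B
      (fun y => Complex.exp (↑(-2 * π * ⟪y, (zc l : E n)⟫) * Complex.I) • gS y)]
    rw [Real.fourier_eq']
    rw [Complex.real_smul]
  calc ∑' l : Fin n → ℤ,
        (∫ x, f x * Complex.exp (-(Complex.I * ((⟪∑ i, (l i : ℝ) • B i, x⟫ : ℝ) : ℂ))))
      = ∑' l : Fin n → ℤ, (c : ℂ) * 𝓕 (⇑gS) (zc l) := tsum_congr hterm
    _ = (c : ℂ) * ∑' l : Fin n → ℤ, 𝓕 (⇑gS) (zc l) := tsum_mul_left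
    _ = (c : ℂ) * ∑' l : Fin n → ℤ, gS (zc l) := by rw [poisson_core n gS]
    _ = (c : ℂ) * ∑' v : {v : EuclideanSpace ℝ (Fin n) //
          ∀ i, ∃ m : ℤ, ⟪v, B i⟫ = 2 * Real.pi * m}, f v := by
        congr 1
        rw [← Equiv.tsum_eq (dualEquiv B) (fun v => f v)]
        apply tsum_congr
        intro l
        rw [dualEquiv_apply, hgS_apply]
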